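/- Let G be a connected pro-algebraic group over an algebraic closure k of 𝔽_q, written as a cofiltered limit G = lim G/H_i of connected quasi-algebraic groups over a directed set, equipped with a Frobenius endomorphism Fr : G → G stabilizing each H_i. Then the Lang map L : G → G, g ↦ g·Fr(g)⁻¹, is surjective on k-points. -/

import Mathlib

open CategoryTheory

/- STATEMENT 5: Lang's theorem for connected pro-algebraic groups, on `k`-points.
The pro-algebraic group `G = lim G/H_i` with compatible Frobenius is abstracted by
the directed inverse system of its stages `G i`, each equipped with a Frobenius
endomorphism `Fr i` for which the classical Lang theorem holds: the Lang map on
each stage is surjective (Lang's theorem for connected quasi-algebraic groups over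
`𝔽_q`) and the fixed points `(G/H_i)(𝔽_q)` form a finite set.  The conclusion is
that the Lang map `g ↦ g · Fr(g)⁻¹` is surjective on the limit, i.e. on
`G(k) = lim (G/H_i)(k)`. -/
theorem lang_surjective_proalgebraic
    {ι : Type*} [Preorder ι] [IsDirected ι (· ≤ ·)] [Nonempty ι]
    (G : ι → Type*) [∀ i, Group (G i)]
    (t : ∀ {i j : ι}, i ≤ j → G j →* G i)
    (hcomp : ∀ {i j k : ι} (hij : i ≤ j) (hjk : j ≤ k) (x : G k),
      t hij (t hjk x) = t (hij.trans hjk) x)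
    (Fr : ∀ i, G i →* G i)
    (hFr : ∀ {i j : ι} (h : i ≤ j) (x : G j), t h (Fr j x) = Fr i (t h x))
    (hLang : ∀ i, Function.Surjective (fun g : G i => g * (Fr i g)⁻¹))
    (hfin : ∀ i, {g : G i | Fr i g = g}.Finite)
    (x : ∀ i, G i) (hx : ∀ {i j : ι} (h : i ≤ j), t h (x j) = x i) :
    ∃ g : ∀ i, G i, (∀ {i j : ι} (h : i ≤ j), t h (g j) = g i) ∧
      ∀ i, g i * (Fr i (g i))⁻¹ = x i := by
  classical
  -- The fiber of the Lang map over `x i`, intersected with the fixed points of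
  -- the idempotent `t (le_refl i)`.
  let S : ι → Type _ :=
    fun i => {g : G i // g * (Fr i (g))⁻¹ = x i ∧ t (le_refl i) g = g}
  -- Transition maps preserve the Lang fibers (over the compatible family `x`).
  have ht : ∀ {i j : ι} (h : i ≤ j) (g : G j), g * (Fr j g)⁻¹ = x j →
      t h g * (Fr i (t h g))⁻¹ = x i := by
    intro i j h g hg
    rw [← hFr h, ← map_inv, ← map_mul, hg, hx h]
  -- Anything in the image of a transition map is fixed by `t (le_refl)`.
  have hfix : ∀ {i j : ι} (h : i ≤ j) (g : G j), t (le_refl i) (t h g) = t h g := by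
    intro i j h g
    exact hcomp (le_refl i) h g
  -- Each fiber is nonempty by Lang's theorem at each stage.
  have hne : ∀ i, Nonempty (S i) := fun i => by
    obtain ⟨g, hg⟩ := hLang i (x i)
    exact ⟨⟨t (le_refl i) g, ht (le_refl i) g hg, hfix (le_refl i) g⟩⟩
  -- Each fiber is finite: it injects into the finite fixed-point set of Frobenius.
  have hfinS : ∀ i, Finite (S i) := by
    intro i
    obtain ⟨g₀, hg₀⟩ := hLang i (x i)
    haveI : Finite {g : G i | Fr i g = g} := (hfin i).to_subtype
    have hmem : ∀ s : S i, Fr i (g₀⁻¹ * (s : G i)) = g₀⁻¹ * (s : G i) := by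
      rintro ⟨g, hg, -⟩
      have h1 : g = x i * Fr i g := by rw [← hg]; group
      have h2 : g₀ = x i * Fr i g₀ := by rw [← hg₀]; group
      show Fr i (g₀⁻¹ * g) = g₀⁻¹ * g
      rw [map_mul, map_inv]
      conv_rhs => rw [h1, h2]
      group
    have hinj : Function.Injective
        (fun s : S i => (⟨g₀⁻¹ * (s : G i), hmem s⟩ : {g : G i | Fr i g = g})) := by
      intro a b hab
      exact Subtype.ext (mul_left_cancel (a := g₀⁻¹) (congrArg Subtype.val hab))
    exact Finite.of_injective _ hinj
  -- Build the inverse system as a functor `ιᵒᵖ ⥤ Type _`.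
  let F : ιᵒᵖ ⥤ Type _ :=
    { obj := fun i => S i.unop
      map := fun {i j} f => TypeCat.ofHom fun s =>
        ⟨t f.unop.le (s : G i.unop), ht f.unop.le _ s.2.1, hfix f.unop.le _⟩
      map_id := fun i => by
        ext s
        exact s.2.2
      map_comp := fun {i j k} f g => by
        ext s
        exact (hcomp g.unop.le f.unop.le (s : G i.unop)).symm }
  haveI : ∀ i : ιᵒᵖ, Finite (F.obj i) := fun i => hfinS i.unop
  haveI : ∀ i : ιᵒᵖ, Nonempty (F.obj i) := fun i => hne i.unop
  obtain ⟨u, hu⟩ := nonempty_sections_of_finite_inverse_system F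
  refine ⟨fun i => (u (Opposite.op i) : G i), ?_, fun i => (u (Opposite.op i)).2.1⟩
  intro i j h
  exact congrArg Subtype.val (hu h.hom.op)
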